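/- The lattice Cll(X) of local clones on a countably infinite set X is not embeddable as a lattice into any algebraic lattice with at most countably many compact elements; i.e., for no algebraic lattice L with countably many compact elements is there an injective map from Cll(X) to L preserving binary meets and joins. -/

import Mathlib

/-- A finitary operation on `X`: an `(n+1)`-ary function `X^(n+1) → X` (arities are ≥ 1). -/
abbrev FinOp (X : Type) := Σ n : ℕ, (Fin (n + 1) → X) → X

/-- A finitary relation on `X`: an `(m+1)`-ary relation `ρ ⊆ X^(m+1)` (arities are ≥ 1). -/
abbrev FinRel (X : Type) := Σ m : ℕ, Set (Fin (m + 1) → X)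

variable {X : Type}

/-- `C` is a clone: it contains all projections and is closed under composition. -/
def IsClone (C : Set (FinOp X)) : Prop :=
  (∀ (n : ℕ) (k : Fin (n + 1)), (⟨n, fun x => x k⟩ : FinOp X) ∈ C) ∧
  (∀ (n m : ℕ) (f : (Fin (n + 1) → X) → X) (g : Fin (n + 1) → (Fin (m + 1) → X) → X),
    (⟨n, f⟩ : FinOp X) ∈ C → (∀ i, (⟨m, g i⟩ : FinOp X) ∈ C) →
    (⟨m, fun x => f fun i => g i x⟩ : FinOp X) ∈ C)

/-- `C` is a local clone: a clone each of whose `n`-ary fragments is closed in the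
product topology on `X^(X^n)`, where `X` carries the discrete topology. -/
def IsLocalClone (C : Set (FinOp X)) : Prop :=
  IsClone C ∧
  ∀ n : ℕ,
    letI : TopologicalSpace X := ⊥
    IsClosed {f : (Fin (n + 1) → X) → X | (⟨n, f⟩ : FinOp X) ∈ C}

/-- The smallest local clone containing `F` (the local clone generated by `F`). -/
def cllClosure (F : Set (FinOp X)) : Set (FinOp X) :=
  ⋂₀ {C : Set (FinOp X) | IsLocalClone C ∧ F ⊆ C}

/-- `f` preserves the relation `ρ`. -/
def Preserves {n m : ℕ} (f : (Fin (n + 1) → X) → X) (ρ : Set (Fin (m + 1) → X)) : Prop :=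
  ∀ r : Fin (n + 1) → Fin (m + 1) → X, (∀ i, r i ∈ ρ) → (fun j => f fun i => r i j) ∈ ρ

/-- `Pol R`: all finitary operations preserving every relation in `R`. -/
def Polymorphisms (R : Set (FinRel X)) : Set (FinOp X) :=
  {f | ∀ ρ ∈ R, Preserves f.2 ρ.2}

/-- `Inv F`: all finitary relations invariant under every operation in `F`. -/
def Invariants (F : Set (FinOp X)) : Set (FinRel X) :=
  {ρ | ∀ f ∈ F, Preserves f.2 ρ.2}

/-- The clone of projections. -/
def projClone (X : Type) : Set (FinOp X) :=
  {f | ∃ k : Fin (f.1 + 1), f.2 = fun x => x k}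

namespace NoEmbAux

/-! ### A family of "successor" functions on `List Bool` indexed by `ℕ → Bool` -/

def F (x : ℕ → Bool) (l : List Bool) : List Bool := l ++ [x l.length]

lemma F_iter_len (x : ℕ → Bool) (m : ℕ) (l : List Bool) :
    ((F x)^[m] l).length = l.length + m := by
  induction m generalizing l with
  | zero => simp
  | succ m ih =>
      rw [Function.iterate_succ_apply, ih]
      simp [F]; omega

lemma F_iter_prefix (x : ℕ → Bool) (m : ℕ) (l : List Bool) :
    l <+: (F x)^[m] l := by
  induction m generalizing l with
  | zero => simp
  | succ m ih =>
      rw [Function.iterate_succ_apply]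
      exact (List.prefix_append l [x l.length]).trans (ih _)

lemma F_iter_get (x : ℕ → Bool) (m : ℕ) (hm : 1 ≤ m) (l : List Bool) :
    ((F x)^[m] l)[l.length]? = some (x l.length) := by
  obtain ⟨m, rfl⟩ := Nat.exists_eq_add_of_le hm
  rw [Nat.add_comm, Function.iterate_succ_apply]
  obtain ⟨t, ht⟩ := F_iter_prefix x m (F x l)
  rw [← ht]
  have hlen : l.length < (F x l).length := by simp [F]
  rw [List.getElem?_append, if_pos hlen]
  show (l ++ [x l.length])[l.length]? = _
  rw [List.getElem?_append, if_neg (lt_irrefl _)]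
  simp

lemma F_eq (x y : ℕ → Bool) (m m' : ℕ) (hm : 1 ≤ m) (hm' : 1 ≤ m')
    (h : ∀ l, (F x)^[m] l = (F y)^[m'] l) : x = y := by
  have hmm : m = m' := by
    have := congrArg List.length (h [])
    rw [F_iter_len, F_iter_len] at this; simpa using this
  subst hmm
  funext n
  have h1 := F_iter_get x m hm (List.replicate n true)
  have h2 := F_iter_get y m hm' (List.replicate n true)
  rw [h (List.replicate n true), h2] at h1
  simpa using h1.symm

/-! ### Transfer to an arbitrary countably infinite type `X` -/

variable {X : Type} (e : X ≃ List Bool)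

def f (x : ℕ → Bool) (a : X) : X := e.symm (F x (e a))

lemma f_iter (x : ℕ → Bool) (m : ℕ) (a : X) :
    (f e x)^[m] a = e.symm ((F x)^[m] (e a)) := by
  induction m with
  | zero => simp
  | succ m ih =>
      rw [Function.iterate_succ_apply', ih]
      simp only [f, Equiv.apply_symm_apply]
      rw [Function.iterate_succ_apply' (F x) m (e a)]

lemma f_iter_m_unique (x : ℕ → Bool) {m m' : ℕ} {a : X}
    (h : (f e x)^[m] a = (f e x)^[m'] a) : m = m' := by
  rw [f_iter, f_iter] at h
  have h2 := congrArg List.length (e.symm.injective h)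
  rw [F_iter_len, F_iter_len] at h2
  omega

lemma f_ne_id (x : ℕ → Bool) (a : X) : f e x a ≠ a := by
  intro h
  have : F x (e a) = e a := by
    have := congrArg e h
    simpa [f] using this
  have := congrArg List.length this
  simp [F] at this

lemma f_iter_family (x y : ℕ → Bool) {m m' : ℕ} (hm : 1 ≤ m) (hm' : 1 ≤ m')
    (h : ∀ a : X, (f e x)^[m] a = (f e y)^[m'] a) : x = y := by
  refine F_eq x y m m' hm hm' fun l => ?_
  have := h (e.symm l)
  rw [f_iter, f_iter] at this
  have := e.symm.injective this
  simpa using this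

end NoEmbAux
namespace NoEmbAux

variable {X : Type} (e : X ≃ List Bool)

/-- The local clone generated by the unary operation `f e x`. -/
def CC (x : ℕ → Bool) : Set (FinOp X) :=
  {P | ∃ (m : ℕ) (k : Fin (P.1 + 1)), P.2 = fun v => (f e x)^[m] (v k)}

lemma mem_CC {x : ℕ → Bool} {n : ℕ} {g : (Fin (n + 1) → X) → X} :
    (⟨n, g⟩ : FinOp X) ∈ CC e x ↔ ∃ (m : ℕ) (k : Fin (n + 1)),
      g = fun v => (f e x)^[m] (v k) := Iff.rfl

lemma CC_isClone (x : ℕ → Bool) : IsClone (CC e x) := by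
  constructor
  · intro n k
    exact ⟨0, k, rfl⟩
  · rintro n m f₀ g hf₀ hg
    rw [mem_CC] at hf₀
    obtain ⟨m₀, k₀, hf₀⟩ := hf₀
    have hk := (mem_CC e).mp (hg k₀)
    obtain ⟨mk, kk, hk⟩ := hk
    rw [mem_CC]
    refine ⟨m₀ + mk, kk, ?_⟩
    funext v
    show f₀ (fun i => g i v) = _
    rw [hf₀]
    show (f e x)^[m₀] (g k₀ v) = _
    rw [show g k₀ v = (f e x)^[mk] (v kk) from congrFun hk v]
    rw [← Function.iterate_add_apply]

lemma isOpen_eval [TopologicalSpace X] [DiscreteTopology X] {n : ℕ}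
    (p : Fin (n + 1) → X) (c : X) :
    IsOpen {h : (Fin (n + 1) → X) → X | h p = c} := by
  have hs : {h : (Fin (n + 1) → X) → X | h p = c} = (fun h => h p) ⁻¹' {c} := rfl
  rw [hs]
  exact IsOpen.preimage (continuous_apply p) (isOpen_discrete _)

lemma CC_closed' [ts : TopologicalSpace X] [DiscreteTopology X] (x : ℕ → Bool) (n : ℕ) :
    IsClosed {g : (Fin (n + 1) → X) → X | (⟨n, g⟩ : FinOp X) ∈ CC e x} := by
  rw [← isOpen_compl_iff, isOpen_iff_forall_mem_open]
  intro g hg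
  set a : X := e.symm [] with ha
  by_cases hA : ∃ M, g (fun _ => a) = (f e x)^[M] a
  · obtain ⟨M, hM⟩ := hA
    have hB2 : ∀ k : Fin (n + 1), ∃ v : Fin (n + 1) → X, g v ≠ (f e x)^[M] (v k) := by
      intro k
      by_contra hc
      push_neg at hc
      exact hg ((mem_CC e).mpr ⟨M, k, funext fun v => hc v⟩)
    choose w hw using hB2
    refine ⟨{h : (Fin (n + 1) → X) → X | h (fun _ => a) = g (fun _ => a)} ∩
        ⋂ k, {h : (Fin (n + 1) → X) → X | h (w k) = g (w k)}, ?_, ?_, ?_⟩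
    · rintro h ⟨h1, h2⟩ hmem
      simp only [Set.mem_setOf_eq] at h1
      simp only [Set.mem_iInter, Set.mem_setOf_eq] at h2
      obtain ⟨m, k, hh⟩ := (mem_CC e).mp hmem
      have hma : (f e x)^[m] a = (f e x)^[M] a := by
        have hca := congrFun hh (fun _ => a)
        rw [hca] at h1
        exact h1.trans hM
      have hm : m = M := f_iter_m_unique e x hma
      subst hm
      apply hw k
      rw [← h2 k, congrFun hh (w k)]
    · refine IsOpen.inter ?_ (isOpen_iInter_of_finite fun k => ?_)
      · exact isOpen_eval _ _
      · exact isOpen_eval _ _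
    · exact ⟨rfl, Set.mem_iInter.mpr fun k => rfl⟩
  · refine ⟨{h : (Fin (n + 1) → X) → X | h (fun _ => a) = g (fun _ => a)}, ?_, ?_, rfl⟩
    · rintro h h1 hmem
      obtain ⟨m, k, hh⟩ := (mem_CC e).mp hmem
      exact hA ⟨m, h1.symm.trans (congrFun hh _)⟩
    · exact isOpen_eval _ _

lemma CC_isLocalClone (x : ℕ → Bool) : IsLocalClone (CC e x) := by
  refine ⟨CC_isClone e x, fun n => ?_⟩
  letI : TopologicalSpace X := ⊥
  haveI : DiscreteTopology X := ⟨rfl⟩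
  exact CC_closed' e x n

lemma proj_subset_CC (x : ℕ → Bool) : projClone X ⊆ CC e x := by
  rintro P ⟨k, hk⟩
  exact ⟨0, k, hk⟩

lemma CC_inter (x y : ℕ → Bool) (hxy : x ≠ y) :
    CC e x ∩ CC e y = projClone X := by
  apply Set.Subset.antisymm
  · rintro P ⟨⟨m, k, h1⟩, ⟨m', k', h2⟩⟩
    rcases Nat.eq_zero_or_pos m with rfl | hm
    · exact ⟨k, h1⟩
    rcases Nat.eq_zero_or_pos m' with rfl | hm'
    · exact ⟨k', h2⟩
    exfalso
    apply hxy
    refine f_iter_family e x y hm hm' fun b => ?_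
    have := congrFun (h1.symm.trans h2) (fun _ => b)
    exact this
  · intro P hP
    exact ⟨proj_subset_CC e x hP, proj_subset_CC e y hP⟩

lemma CC_injective : Function.Injective (CC e) := by
  intro x y hxy
  by_contra hne
  have h1 : (⟨0, fun v => f e x (v 0)⟩ : FinOp X) ∈ CC e x := ⟨1, 0, rfl⟩
  have h2 : (⟨0, fun v => f e x (v 0)⟩ : FinOp X) ∈ projClone X := by
    rw [← CC_inter e x y hne]
    exact ⟨h1, hxy ▸ h1⟩
  obtain ⟨k, hk⟩ := h2
  exact f_ne_id e x (e.symm []) (congrFun hk (fun _ => e.symm []))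

lemma projClone_isClone : IsClone (projClone X) := by
  constructor
  · intro n k
    exact ⟨k, rfl⟩
  · rintro n m f₀ g hj hg
    obtain ⟨j, hj⟩ := hj
    obtain ⟨k', hk'⟩ := hg j
    refine ⟨k', ?_⟩
    show (fun v => f₀ (fun i => g i v)) = _
    funext v
    show f₀ (fun i => g i v) = v k'
    have hj' : f₀ = fun w => w j := hj
    rw [hj']
    show g j v = v k'
    have hk'' : g j = fun w => w k' := hk'
    rw [hk'']

lemma projClone_isLocalClone (e : X ≃ List Bool) : IsLocalClone (projClone X) := by
  refine ⟨projClone_isClone, fun n => ?_⟩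
  have hne : (fun _ : ℕ => false) ≠ (fun _ : ℕ => true) := by
    intro h
    simpa using congrFun h 0
  have key := CC_inter e (fun _ => false) (fun _ => true) hne
  letI : TopologicalSpace X := ⊥
  haveI : DiscreteTopology X := ⟨rfl⟩
  have hset : {g : (Fin (n + 1) → X) → X | (⟨n, g⟩ : FinOp X) ∈ projClone X} =
      {g : (Fin (n + 1) → X) → X | (⟨n, g⟩ : FinOp X) ∈ CC e (fun _ => false)} ∩
      {g : (Fin (n + 1) → X) → X | (⟨n, g⟩ : FinOp X) ∈ CC e (fun _ => true)} := by
    ext g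
    constructor
    · intro hgp
      rw [← key] at hgp
      exact hgp
    · intro hgi
      rw [← key]
      exact hgi
  rw [hset]
  exact (CC_closed' e _ n).inter (CC_closed' e _ n)

end NoEmbAux

theorem notCntBool : ¬ Countable (ℕ → Bool) := by
  intro h
  have h2 : Countable (Set ℕ) :=
    Countable.of_equiv _ ((Equiv.refl ℕ).arrowCongr Equiv.propEquivBool).symm
  obtain ⟨f, hf⟩ := exists_surjective_nat (Set ℕ)
  exact Function.cantor_surjective f hf

/-- The lattice of local clones on a countably infinite set `X` does not embed
as a lattice into any algebraic lattice with at most countably many compact elements: there is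
no injective map from the local clones on `X` into such a lattice preserving binary meets
(intersections of local clones) and binary joins (generated local clones of unions). -/
theorem no_embedding_into_countably_algebraic (X : Type) [Countable X] [Infinite X]
    (L : Type) [CompleteLattice L] [IsCompactlyGenerated L]
    (hcnt : {a : L | IsCompactElement a}.Countable) :
    ¬ ∃ σ : Set (FinOp X) → L,
        Set.InjOn σ {C : Set (FinOp X) | IsLocalClone C} ∧
        (∀ C D : Set (FinOp X), IsLocalClone C → IsLocalClone D →
          σ (C ∩ D) = σ C ⊓ σ D ∧ σ (cllClosure (C ∪ D)) = σ C ⊔ σ D) := by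
  rintro ⟨σ, hinj, hlat⟩
  obtain ⟨e⟩ : Nonempty (X ≃ List Bool) := nonempty_equiv_of_countable
  set m0 : L := σ (projClone X) with hm0
  have hlocM : IsLocalClone (projClone X) := NoEmbAux.projClone_isLocalClone e
  have hlocC : ∀ x : ℕ → Bool, IsLocalClone (NoEmbAux.CC e x) :=
    fun x => NoEmbAux.CC_isLocalClone e x
  have hle : ∀ x : ℕ → Bool, m0 ≤ σ (NoEmbAux.CC e x) := by
    intro x
    have h := (hlat _ _ hlocM (hlocC x)).1
    rw [Set.inter_eq_left.mpr (NoEmbAux.proj_subset_CC e x)] at h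
    exact inf_eq_left.mp h.symm
  have hinf : ∀ x y : ℕ → Bool, x ≠ y →
      σ (NoEmbAux.CC e x) ⊓ σ (NoEmbAux.CC e y) = m0 := by
    intro x y hxy
    have h := (hlat _ _ (hlocC x) (hlocC y)).1
    rw [NoEmbAux.CC_inter e x y hxy] at h
    exact h.symm
  set T := {x : ℕ → Bool | σ (NoEmbAux.CC e x) ≠ m0} with hT
  have hTc : T.Countable := by
    have hex : ∀ x ∈ T, ∃ c : L, IsCompactElement c ∧
        c ≤ σ (NoEmbAux.CC e x) ∧ ¬ c ≤ m0 := by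
      intro x hx
      by_contra hc
      push_neg at hc
      obtain ⟨s, hs, hsup⟩ := IsCompactlyGenerated.exists_sSup_eq (σ (NoEmbAux.CC e x))
      have hlem : σ (NoEmbAux.CC e x) ≤ m0 := by
        conv_lhs => rw [← hsup]
        exact sSup_le fun b hb => hc b (hs b hb) (hsup ▸ le_sSup hb)
      exact hx (le_antisymm hlem (hle x))
    choose! c hc1 hc2 hc3 using hex
    have hinjc : Set.InjOn c T := by
      intro x hx y hy hxy2
      by_contra hne
      refine hc3 x hx ?_
      rw [← hinf x y hne]
      exact le_inf (hc2 x hx) (hxy2 ▸ hc2 y hy)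
    exact Set.MapsTo.countable_of_injOn (fun x hx => hc1 x hx) hinjc hcnt
  have hTc2 : {x : ℕ → Bool | σ (NoEmbAux.CC e x) = m0}.Countable := by
    apply Set.Subsingleton.countable
    intro x hx y hy
    exact NoEmbAux.CC_injective e (hinj (hlocC x) (hlocC y) (hx.trans hy.symm))
  have huniv : (Set.univ : Set (ℕ → Bool)).Countable := by
    refine Set.Countable.mono ?_ (hTc.union hTc2)
    intro x _
    by_cases h : σ (NoEmbAux.CC e x) = m0
    · exact Or.inr h
    · exact Or.inl h
  exact notCntBool (Set.countable_univ_iff.mp huniv)
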